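/- Let M be a compact connected Riemannian 4-manifold and let r₁⁺, r₂⁺, r₃⁺, r₁⁻, r₂⁻, r₃⁻ : M → ℝ be continuous functions such that (i) rᵢ⁺(x) + rⱼ⁻(x) > 0 for all x ∈ M and all i, j; (ii) at every point x, at least one of the six functions is nonpositive; (iii) at some point p, r₃⁺(p) ≤ 0 (where r₃± ≤ r₂± ≤ r₁±). Then rᵢ⁻(x) > 0 for all x ∈ M and all i. -/
import Mathlib


/-- Topological core of Lemma 4.  `M` is a compact connected (Riemannian
manifold, here metric) space; `rp i` and `rm i` (`i = 0, 1, 2`) are the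
continuous eigenvalue functions of `s/3 - 2W±`, ordered so that
`rp 2 ≤ rp 1 ≤ rp 0` (so `rp 2` plays the role of `r₃⁺`, etc.).  Assume
(i) `rp i x + rm j x > 0` for all `x, i, j`; (ii) at every point at least one
of the six functions is nonpositive; (iii) at some point `p`, `rp 2 p ≤ 0`.
Then `rm i x > 0` for all `x` and `i`, i.e. `s/3 - 2W⁻` is positive
everywhere. -/
theorem stmt_12 {M : Type*} [MetricSpace M] [CompactSpace M] [ConnectedSpace M]
    (rp rm : Fin 3 → M → ℝ)
    (hcp : ∀ i, Continuous (rp i)) (hcm : ∀ i, Continuous (rm i))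
    (hordp : ∀ x, rp 2 x ≤ rp 1 x ∧ rp 1 x ≤ rp 0 x)
    (hordm : ∀ x, rm 2 x ≤ rm 1 x ∧ rm 1 x ≤ rm 0 x)
    (hpos : ∀ x, ∀ i j : Fin 3, rp i x + rm j x > 0)
    (hnonpos : ∀ x, (∃ i, rp i x ≤ 0) ∨ (∃ i, rm i x ≤ 0))
    (p : M) (hp : rp 2 p ≤ 0) :
    ∀ x, ∀ i : Fin 3, rm i x > 0 := by
  set A : Set M := {x | rp 2 x ≤ 0} with hA
  have hcompl : Aᶜ = {x | rm 2 x ≤ 0} := by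
    ext x
    simp only [Set.mem_compl_iff, hA, Set.mem_setOf_eq, not_le]
    constructor
    · intro hx
      rcases hnonpos x with ⟨i, hi⟩ | ⟨i, hi⟩
      · exfalso
        have h2 : rp 2 x ≤ rp i x := by
          fin_cases i
          · exact (hordp x).1.trans (hordp x).2
          · exact (hordp x).1
          · exact le_refl _
        linarith
      · have h2 : rm 2 x ≤ rm i x := by
          fin_cases i
          · exact (hordm x).1.trans (hordm x).2
          · exact (hordm x).1
          · exact le_refl _
        linarith
    · intro hx
      have := hpos x 2 2
      linarith
  have hAclosed : IsClosed A := isClosed_le (hcp 2) continuous_const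
  have hAopen : IsOpen A := by
    rw [← isClosed_compl_iff, hcompl]
    exact isClosed_le (hcm 2) continuous_const
  have hAuniv : A = Set.univ :=
    (IsClopen.eq_univ ⟨hAclosed, hAopen⟩ ⟨p, hp⟩)
  intro x i
  have hx : rp 2 x ≤ 0 := by
    have : x ∈ A := hAuniv ▸ Set.mem_univ x
    exact this
  have h2 : rm 2 x > 0 := by have := hpos x 2 2; linarith
  have hi : rm 2 x ≤ rm i x := by
    fin_cases i
    · exact (hordm x).1.trans (hordm x).2
    · exact (hordm x).1
    · exact le_refl _
  linarith
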